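/- Let (c_Δ) be a translation-covariant Feller system of jump rates, let (ν_n) be Borel probability measures on Ω converging weakly to ν, and let (Φ_n), Φ be translation-invariant potentials with ‖Φ‖ < ∞ and ‖Φ_n − Φ‖ → 0. Then ⟨ν_n, Φ_n⟩_L → ⟨ν, Φ⟩_L; that is, the pairing (ν,Φ) ↦ ⟨ν,Φ⟩_L is jointly continuous with respect to the weak topology on probability measures and the ‖·‖-topology on translation-invariant potentials. -/

import Mathlib

open MeasureTheory Filter Topology

/-- The lattice `ℤ^d`. -/
abbrev Zd (d : ℕ) := Fin d → ℤ

/-- The configuration space `Ω = {1,…,q}^{ℤ^d}`. -/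
abbrev Conf (d q : ℕ) := Zd d → Fin q

variable {d q : ℕ}

/-- The shift `θ_i`, `(θ_i σ)(j) = σ(j+i)`. -/
def shift (i : Zd d) (σ : Conf d q) : Conf d q := fun j => σ (j + i)

/-- An interaction potential: a family `Φ_A : Ω → ℝ` indexed by finite `A ⊂ ℤ^d`. -/
abbrev Pot (d q : ℕ) := Finset (Zd d) → Conf d q → ℝ

/-- A translation-invariant potential: each `Φ_A` is continuous, depends only on the
coordinates in `A`, and `Φ_{A+i} = Φ_A ∘ θ_i`. -/
structure IsPotential (Φ : Pot d q) : Prop where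
  continuous : ∀ A, Continuous (Φ A)
  isLocal : ∀ (A : Finset (Zd d)) (σ τ : Conf d q), (∀ j ∈ A, σ j = τ j) → Φ A σ = Φ A τ
  shiftCov : ∀ (A : Finset (Zd d)) (i : Zd d) (σ : Conf d q),
    Φ (A.image (· + i)) σ = Φ A (shift i σ)

/-- sup norm `‖f‖_∞` of a function on the (compact) configuration space. -/
noncomputable def supnorm (f : Conf d q → ℝ) : ℝ := ⨆ σ, |f σ|

/-- Summability of `Σ_{A∋0} ‖Φ_A‖_∞` (finiteness of `‖Φ‖`). -/
def PNormSummable (Φ : Pot d q) : Prop :=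
  Summable fun A : {A : Finset (Zd d) // (0 : Zd d) ∈ A} => supnorm (Φ A.1)

/-- The norm `‖Φ‖ = Σ_{A∋0} ‖Φ_A‖_∞`. -/
noncomputable def pnorm (Φ : Pot d q) : ℝ :=
  ∑' A : {A : Finset (Zd d) // (0 : Zd d) ∈ A}, supnorm (Φ A.1)

/-- The norm `‖Φ‖₀ = Σ_{A∋0} |A|⁻¹ ‖Φ_A‖_∞`. -/
noncomputable def pnorm0 (Φ : Pot d q) : ℝ :=
  ∑' A : {A : Finset (Zd d) // (0 : Zd d) ∈ A}, (A.1.card : ℝ)⁻¹ * supnorm (Φ A.1)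

/-- A translation-covariant Feller system of jump rates, modelled through the weights
`c_Δ(η, {ζ_Δ})` of the finite Borel measures `c_Δ(η,·)` on the finite discrete space
`{1,…,q}^Δ`: `η ↦ c_Δ(η,·)` is (weakly) continuous, the family is shift-covariant,
and `Σ_{Δ∋0} c̄_Δ < ∞` where `c̄_Δ = sup_η c_Δ(η, {1,…,q}^Δ)`. -/
structure JumpRates (d q : ℕ) : Type where
  /-- the weight `c_Δ(η, {ζ_Δ})` -/
  c : (Δ : Finset (Zd d)) → Conf d q → (↥Δ → Fin q) → NNReal
  feller : ∀ (Δ : Finset (Zd d)) (ζ : Δ → Fin q), Continuous fun η => c Δ η ζ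
  shiftCov : ∀ (i : Zd d) (Δ : Finset (Zd d)) (η : Conf d q)
      (ζ : ↥(Δ.image (· + i)) → Fin q),
    c (Δ.image (· + i)) η ζ
      = c Δ (shift i η) (fun j => ζ ⟨j.1 + i, Finset.mem_image_of_mem _ j.2⟩)
  cbar_summable : Summable fun Δ : {Δ : Finset (Zd d) // (0 : Zd d) ∈ Δ} =>
    ⨆ η : Conf d q, ∑ ζ : ↥Δ.1 → Fin q, (c Δ.1 η ζ : ℝ)

/-- `c̄_Δ = sup_η c_Δ(η, {1,…,q}^Δ)`. -/
noncomputable def cbar (R : JumpRates d q) (Δ : Finset (Zd d)) : ℝ :=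
  ⨆ η : Conf d q, ∑ ζ : Δ → Fin q, (R.c Δ η ζ : ℝ)

/-- `Σ_{Δ∋0} c̄_Δ`. -/
noncomputable def cbarSum (R : JumpRates d q) : ℝ :=
  ∑' Δ : {Δ : Finset (Zd d) // (0 : Zd d) ∈ Δ}, cbar R Δ.1

/-- The configuration `ζ_Δ η_{Δ^c}`: equal to `ζ` on `Δ` and to `η` off `Δ`. -/
def patch (Δ : Finset (Zd d)) (ζ : Δ → Fin q) (η : Conf d q) : Conf d q :=
  fun j => if h : j ∈ Δ then ζ ⟨j, h⟩ else η j

/-- The `Δ`-term of the function `F_{L,Φ}`: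
`|Δ|⁻¹ ∫ c_Δ(η,dζ_Δ) Σ_{A∩Δ≠∅} [Φ_A(ζ_Δη_{Δ^c}) − Φ_A(η)]`. -/
noncomputable def termL (R : JumpRates d q) (Φ : Pot d q) (Δ : Finset (Zd d))
    (η : Conf d q) : ℝ :=
  (Δ.card : ℝ)⁻¹ * ∑ ζ : Δ → Fin q, (R.c Δ η ζ : ℝ) *
    ∑' A : {A : Finset (Zd d) // (A ∩ Δ).Nonempty}, (Φ A.1 (patch Δ ζ η) - Φ A.1 η)

/-- The function `F_{L,Φ}(η) = Σ_{Δ∋0} |Δ|⁻¹ ∫ c_Δ(η,dζ_Δ) Σ_{A∩Δ≠∅} [Φ_A(ζ_Δη_{Δ^c}) − Φ_A(η)]`. -/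
noncomputable def FL (R : JumpRates d q) (Φ : Pot d q) (η : Conf d q) : ℝ :=
  ∑' Δ : {Δ : Finset (Zd d) // (0 : Zd d) ∈ Δ}, termL R Φ Δ.1 η

/-- The pairing `⟨ν,Φ⟩_L`. -/
noncomputable def pairingL (R : JumpRates d q) (Φ : Pot d q) (ν : Measure (Conf d q)) : ℝ :=
  ∫ η, FL R Φ η ∂ν

section Aux

variable {d q : ℕ}

lemma shift_surjective (i : Zd d) : Function.Surjective (shift (q := q) i) := by
  intro σ
  refine ⟨shift (-i) σ, funext fun j => ?_⟩
  simp [shift, add_neg_cancel_right]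

lemma supnorm_nonneg (f : Conf d q → ℝ) : 0 ≤ supnorm f :=
  Real.iSup_nonneg fun _ => abs_nonneg _

lemma abs_le_supnorm {f : Conf d q → ℝ} (hf : Continuous f) (σ : Conf d q) :
    |f σ| ≤ supnorm f := by
  have hb : BddAbove (Set.range fun σ : Conf d q => |f σ|) := by
    have := (isCompact_univ (X := Conf d q)).bddAbove_image hf.abs.continuousOn
    rwa [Set.image_univ] at this
  exact le_ciSup hb σ

lemma diff_norm_le {Φ : Pot d q} (hΦ : IsPotential Φ) (A : Finset (Zd d)) (x y : Conf d q) :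
    ‖Φ A x - Φ A y‖ ≤ 2 * supnorm (Φ A) := by
  calc ‖Φ A x - Φ A y‖ ≤ ‖Φ A x‖ + ‖Φ A y‖ := norm_sub_le _ _
    _ ≤ supnorm (Φ A) + supnorm (Φ A) := by
        rw [Real.norm_eq_abs, Real.norm_eq_abs]
        exact add_le_add (abs_le_supnorm (hΦ.continuous A) x) (abs_le_supnorm (hΦ.continuous A) y)
    _ = 2 * supnorm (Φ A) := by ring

lemma supnorm_shift {Φ : Pot d q} (hΦ : IsPotential Φ) (A : Finset (Zd d)) (i : Zd d) :
    supnorm (Φ (A.image (· + i))) = supnorm (Φ A) := by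
  unfold supnorm
  rw [show (fun σ : Conf d q => |Φ (A.image (· + i)) σ|)
      = fun σ : Conf d q => |Φ A (shift i σ)| from funext fun σ => by rw [hΦ.shiftCov]]
  exact (shift_surjective i).iSup_comp (g := fun σ => |Φ A σ|)

/-- Translating the index set of the potential norm. -/
noncomputable def memEquiv (j : Zd d) :
    {A : Finset (Zd d) // (0 : Zd d) ∈ A} ≃ {A : Finset (Zd d) // j ∈ A} where
  toFun A := ⟨A.1.image (· + j), by simpa using Finset.mem_image_of_mem (· + j) A.2⟩
  invFun A := ⟨A.1.image (· + (-j)), by simpa using Finset.mem_image_of_mem (· + (-j)) A.2⟩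
  left_inv A := Subtype.ext (by
    dsimp only
    rw [Finset.image_image,
      show ((· + (-j)) ∘ (· + j)) = (id : Zd d → Zd d) from funext fun a => add_neg_cancel_right a j,
      Finset.image_id])
  right_inv A := Subtype.ext (by
    dsimp only
    rw [Finset.image_image,
      show ((· + j) ∘ (· + (-j))) = (id : Zd d → Zd d) from funext fun a => neg_add_cancel_right a j,
      Finset.image_id])

lemma summable_mem {Φ : Pot d q} (hΦ : IsPotential Φ) (hs : PNormSummable Φ) (j : Zd d) :
    Summable fun A : {A : Finset (Zd d) // j ∈ A} => supnorm (Φ A.1) := by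
  rw [← Equiv.summable_iff (memEquiv j)]
  have h : ((fun A : {A : Finset (Zd d) // j ∈ A} => supnorm (Φ A.1)) ∘ (memEquiv j))
      = fun A : {A : Finset (Zd d) // (0 : Zd d) ∈ A} => supnorm (Φ A.1) :=
    funext fun A => supnorm_shift hΦ A.1 j
  rw [h]; exact hs

lemma tsum_mem' {Φ : Pot d q} (hΦ : IsPotential Φ) (j : Zd d) :
    ∑' A : {A : Finset (Zd d) // j ∈ A}, supnorm (Φ A.1) = pnorm Φ := by
  rw [← Equiv.tsum_eq (memEquiv j) (fun A : {A : Finset (Zd d) // j ∈ A} => supnorm (Φ A.1))]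
  exact tsum_congr fun A => supnorm_shift hΦ A.1 j

/-- Selecting a point of `A ∩ Δ`. -/
noncomputable def selMem {Δ : Finset (Zd d)} (A : {A : Finset (Zd d) // (A ∩ Δ).Nonempty}) :
    Σ j : {x : Zd d // x ∈ Δ}, {B : Finset (Zd d) // j.1 ∈ B} :=
  ⟨⟨A.2.choose, (Finset.mem_inter.mp A.2.choose_spec).2⟩,
   ⟨A.1, (Finset.mem_inter.mp A.2.choose_spec).1⟩⟩

lemma selMem_injective {Δ : Finset (Zd d)} :
    Function.Injective (selMem (d := d) (Δ := Δ)) := fun A B h =>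
  Subtype.ext (congrArg
    (fun p : Σ j : {x : Zd d // x ∈ Δ}, {B : Finset (Zd d) // j.1 ∈ B} => p.2.1) h)

lemma summable_sigmaMem {Φ : Pot d q} (hΦ : IsPotential Φ) (hs : PNormSummable Φ)
    (Δ : Finset (Zd d)) :
    Summable fun p : Σ j : {x : Zd d // x ∈ Δ}, {B : Finset (Zd d) // j.1 ∈ B} =>
      supnorm (Φ p.2.1) := by
  refine (summable_sigma_of_nonneg fun p => supnorm_nonneg _).mpr
    ⟨fun j => summable_mem hΦ hs j.1, ?_⟩
  exact .of_finite

lemma summable_restrict {Φ : Pot d q} (hΦ : IsPotential Φ) (hs : PNormSummable Φ)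
    (Δ : Finset (Zd d)) :
    Summable fun A : {A : Finset (Zd d) // (A ∩ Δ).Nonempty} => supnorm (Φ A.1) := by
  have h := (summable_sigmaMem hΦ hs Δ).comp_injective (selMem_injective (d := d) (Δ := Δ))
  exact h.congr fun A => rfl

lemma tsum_restrict_le {Φ : Pot d q} (hΦ : IsPotential Φ) (hs : PNormSummable Φ)
    (Δ : Finset (Zd d)) :
    ∑' A : {A : Finset (Zd d) // (A ∩ Δ).Nonempty}, supnorm (Φ A.1)
      ≤ (Δ.card : ℝ) * pnorm Φ := by
  have h1 := Summable.tsum_le_tsum_of_inj selMem selMem_injective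
    (fun c _ => supnorm_nonneg _) (fun A => le_refl (supnorm (Φ A.1)))
    (summable_restrict hΦ hs Δ) (summable_sigmaMem hΦ hs Δ)
  refine h1.trans (le_of_eq ?_)
  rw [Summable.tsum_sigma (summable_sigmaMem hΦ hs Δ)]
  calc ∑' j : {x : Zd d // x ∈ Δ}, ∑' B : {B : Finset (Zd d) // j.1 ∈ B}, supnorm (Φ B.1)
      = ∑' _j : {x : Zd d // x ∈ Δ}, pnorm Φ := tsum_congr fun j => tsum_mem' hΦ j.1
    _ = (Δ.card : ℝ) * pnorm Φ := by
        rw [tsum_fintype]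
        simp [Finset.sum_const, Fintype.card_coe, nsmul_eq_mul]

lemma summable_diff {Φ : Pot d q} (hΦ : IsPotential Φ) (hs : PNormSummable Φ)
    (Δ : Finset (Zd d)) (ζ : Δ → Fin q) (η : Conf d q) :
    Summable fun A : {A : Finset (Zd d) // (A ∩ Δ).Nonempty} =>
      Φ A.1 (patch Δ ζ η) - Φ A.1 η :=
  Summable.of_norm_bounded ((summable_restrict hΦ hs Δ).mul_left 2)
    fun A => diff_norm_le hΦ A.1 _ _

lemma inner_bound {Φ : Pot d q} (hΦ : IsPotential Φ) (hs : PNormSummable Φ)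
    (Δ : Finset (Zd d)) (ζ : Δ → Fin q) (η : Conf d q) :
    |∑' A : {A : Finset (Zd d) // (A ∩ Δ).Nonempty}, (Φ A.1 (patch Δ ζ η) - Φ A.1 η)|
      ≤ 2 * ((Δ.card : ℝ) * pnorm Φ) := by
  have hsum2 : Summable fun A : {A : Finset (Zd d) // (A ∩ Δ).Nonempty} =>
      2 * supnorm (Φ A.1) := (summable_restrict hΦ hs Δ).mul_left 2
  have hb : ∀ A : {A : Finset (Zd d) // (A ∩ Δ).Nonempty},
      ‖Φ A.1 (patch Δ ζ η) - Φ A.1 η‖ ≤ 2 * supnorm (Φ A.1) :=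
    fun A => diff_norm_le hΦ A.1 _ _
  have hnorm : Summable fun A : {A : Finset (Zd d) // (A ∩ Δ).Nonempty} =>
      ‖Φ A.1 (patch Δ ζ η) - Φ A.1 η‖ :=
    Summable.of_nonneg_of_le (fun _ => norm_nonneg _) hb hsum2
  calc |∑' A : {A : Finset (Zd d) // (A ∩ Δ).Nonempty}, (Φ A.1 (patch Δ ζ η) - Φ A.1 η)|
      ≤ ∑' A : {A : Finset (Zd d) // (A ∩ Δ).Nonempty}, ‖Φ A.1 (patch Δ ζ η) - Φ A.1 η‖ :=
        norm_tsum_le_tsum_norm hnorm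
    _ ≤ ∑' A : {A : Finset (Zd d) // (A ∩ Δ).Nonempty}, 2 * supnorm (Φ A.1) :=
        Summable.tsum_le_tsum hb hnorm hsum2
    _ = 2 * ∑' A : {A : Finset (Zd d) // (A ∩ Δ).Nonempty}, supnorm (Φ A.1) := tsum_mul_left
    _ ≤ 2 * ((Δ.card : ℝ) * pnorm Φ) := by
        have := tsum_restrict_le hΦ hs Δ
        nlinarith [this]

lemma csum_continuous (R : JumpRates d q) (Δ : Finset (Zd d)) :
    Continuous fun η : Conf d q => ∑ ζ : Δ → Fin q, (R.c Δ η ζ : ℝ) :=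
  continuous_finset_sum _ fun ζ _ => NNReal.continuous_coe.comp (R.feller Δ ζ)

lemma csum_le_cbar (R : JumpRates d q) (Δ : Finset (Zd d)) (η : Conf d q) :
    ∑ ζ : Δ → Fin q, (R.c Δ η ζ : ℝ) ≤ cbar R Δ := by
  have hb : BddAbove (Set.range fun η : Conf d q => ∑ ζ : Δ → Fin q, (R.c Δ η ζ : ℝ)) := by
    have := (isCompact_univ (X := Conf d q)).bddAbove_image (csum_continuous R Δ).continuousOn
    rwa [Set.image_univ] at this
  exact le_ciSup hb η

lemma pnorm_nonneg (Φ : Pot d q) : 0 ≤ pnorm Φ :=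
  tsum_nonneg fun A => supnorm_nonneg _

lemma termL_bound (R : JumpRates d q) {Φ : Pot d q} (hΦ : IsPotential Φ)
    (hs : PNormSummable Φ) {Δ : Finset (Zd d)} (hΔ : (0 : Zd d) ∈ Δ) (η : Conf d q) :
    |termL R Φ Δ η| ≤ cbar R Δ * (2 * pnorm Φ) := by
  have hcard : (0 : ℝ) < (Δ.card : ℝ) := by
    exact_mod_cast Finset.card_pos.mpr ⟨0, hΔ⟩
  have hpn : 0 ≤ pnorm Φ := pnorm_nonneg Φ
  unfold termL
  rw [abs_mul, abs_inv, abs_of_nonneg hcard.le]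
  have h1 : |∑ ζ : Δ → Fin q, (R.c Δ η ζ : ℝ) *
        ∑' A : {A : Finset (Zd d) // (A ∩ Δ).Nonempty}, (Φ A.1 (patch Δ ζ η) - Φ A.1 η)|
      ≤ (∑ ζ : Δ → Fin q, (R.c Δ η ζ : ℝ)) * (2 * ((Δ.card : ℝ) * pnorm Φ)) := by
    refine (Finset.abs_sum_le_sum_abs _ _).trans ?_
    calc ∑ ζ : Δ → Fin q, |(R.c Δ η ζ : ℝ) *
          ∑' A : {A : Finset (Zd d) // (A ∩ Δ).Nonempty}, (Φ A.1 (patch Δ ζ η) - Φ A.1 η)|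
        ≤ ∑ ζ : Δ → Fin q, (R.c Δ η ζ : ℝ) * (2 * ((Δ.card : ℝ) * pnorm Φ)) := by
          refine Finset.sum_le_sum fun ζ _ => ?_
          rw [abs_mul, abs_of_nonneg (NNReal.coe_nonneg _)]
          exact mul_le_mul_of_nonneg_left (inner_bound hΦ hs Δ ζ η) (NNReal.coe_nonneg _)
      _ = (∑ ζ : Δ → Fin q, (R.c Δ η ζ : ℝ)) * (2 * ((Δ.card : ℝ) * pnorm Φ)) := by
          rw [Finset.sum_mul]
  have hcsum : 0 ≤ ∑ ζ : Δ → Fin q, (R.c Δ η ζ : ℝ) :=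
    Finset.sum_nonneg fun ζ _ => NNReal.coe_nonneg _
  calc (Δ.card : ℝ)⁻¹ * |∑ ζ : Δ → Fin q, (R.c Δ η ζ : ℝ) *
        ∑' A : {A : Finset (Zd d) // (A ∩ Δ).Nonempty}, (Φ A.1 (patch Δ ζ η) - Φ A.1 η)|
      ≤ (Δ.card : ℝ)⁻¹ * ((∑ ζ : Δ → Fin q, (R.c Δ η ζ : ℝ)) * (2 * ((Δ.card : ℝ) * pnorm Φ))) :=
        mul_le_mul_of_nonneg_left h1 (inv_nonneg.mpr hcard.le)
    _ = (∑ ζ : Δ → Fin q, (R.c Δ η ζ : ℝ)) * (2 * pnorm Φ) := by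
        field_simp
    _ ≤ cbar R Δ * (2 * pnorm Φ) :=
        mul_le_mul_of_nonneg_right (csum_le_cbar R Δ η) (by positivity)

lemma summable_cbar (R : JumpRates d q) :
    Summable fun Δ : {Δ : Finset (Zd d) // (0 : Zd d) ∈ Δ} => cbar R Δ.1 :=
  R.cbar_summable

lemma summable_termL (R : JumpRates d q) {Φ : Pot d q} (hΦ : IsPotential Φ)
    (hs : PNormSummable Φ) (η : Conf d q) :
    Summable fun Δ : {Δ : Finset (Zd d) // (0 : Zd d) ∈ Δ} => termL R Φ Δ.1 η :=
  Summable.of_norm_bounded ((summable_cbar R).mul_right (2 * pnorm Φ))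
    fun Δ => by rw [Real.norm_eq_abs]; exact termL_bound R hΦ hs Δ.2 η

lemma FL_bound (R : JumpRates d q) {Φ : Pot d q} (hΦ : IsPotential Φ)
    (hs : PNormSummable Φ) (η : Conf d q) :
    |FL R Φ η| ≤ cbarSum R * (2 * pnorm Φ) := by
  have hg : Summable fun Δ : {Δ : Finset (Zd d) // (0 : Zd d) ∈ Δ} =>
      cbar R Δ.1 * (2 * pnorm Φ) := (summable_cbar R).mul_right _
  have hb : ∀ Δ : {Δ : Finset (Zd d) // (0 : Zd d) ∈ Δ},
      ‖termL R Φ Δ.1 η‖ ≤ cbar R Δ.1 * (2 * pnorm Φ) :=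
    fun Δ => by rw [Real.norm_eq_abs]; exact termL_bound R hΦ hs Δ.2 η
  have hnorm : Summable fun Δ : {Δ : Finset (Zd d) // (0 : Zd d) ∈ Δ} =>
      ‖termL R Φ Δ.1 η‖ := Summable.of_nonneg_of_le (fun _ => norm_nonneg _) hb hg
  calc |FL R Φ η| ≤ ∑' Δ : {Δ : Finset (Zd d) // (0 : Zd d) ∈ Δ}, ‖termL R Φ Δ.1 η‖ :=
        norm_tsum_le_tsum_norm hnorm
    _ ≤ ∑' Δ : {Δ : Finset (Zd d) // (0 : Zd d) ∈ Δ}, cbar R Δ.1 * (2 * pnorm Φ) :=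
        Summable.tsum_le_tsum hb hnorm hg
    _ = cbarSum R * (2 * pnorm Φ) := tsum_mul_right

lemma patch_continuous (Δ : Finset (Zd d)) (ζ : Δ → Fin q) :
    Continuous fun η : Conf d q => patch Δ ζ η := by
  refine continuous_pi fun j => ?_
  simp only [patch]
  by_cases h : j ∈ Δ
  · simp only [dif_pos h]; exact continuous_const
  · simp only [dif_neg h]; exact continuous_apply j

lemma inner_continuous {Φ : Pot d q} (hΦ : IsPotential Φ) (hs : PNormSummable Φ)
    (Δ : Finset (Zd d)) (ζ : Δ → Fin q) :
    Continuous fun η : Conf d q =>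
      ∑' A : {A : Finset (Zd d) // (A ∩ Δ).Nonempty}, (Φ A.1 (patch Δ ζ η) - Φ A.1 η) :=
  continuous_tsum
    (fun A => ((hΦ.continuous A.1).comp (patch_continuous Δ ζ)).sub (hΦ.continuous A.1))
    ((summable_restrict hΦ hs Δ).mul_left 2)
    (fun A η => diff_norm_le hΦ A.1 _ _)

lemma termL_continuous (R : JumpRates d q) {Φ : Pot d q} (hΦ : IsPotential Φ)
    (hs : PNormSummable Φ) (Δ : Finset (Zd d)) : Continuous (termL R Φ Δ) := by
  unfold termL
  exact continuous_const.mul (continuous_finset_sum _ fun ζ _ =>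
    (NNReal.continuous_coe.comp (R.feller Δ ζ)).mul (inner_continuous hΦ hs Δ ζ))

lemma FL_continuous (R : JumpRates d q) {Φ : Pot d q} (hΦ : IsPotential Φ)
    (hs : PNormSummable Φ) : Continuous (FL R Φ) := by
  unfold FL
  exact continuous_tsum (fun Δ => termL_continuous R hΦ hs Δ.1)
    ((summable_cbar R).mul_right (2 * pnorm Φ))
    (fun Δ η => by rw [Real.norm_eq_abs]; exact termL_bound R hΦ hs Δ.2 η)

lemma IsPotential.sub {Φ Ψ : Pot d q} (hΦ : IsPotential Φ) (hΨ : IsPotential Ψ) :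
    IsPotential (Φ - Ψ) where
  continuous A := ((hΦ.continuous A).sub (hΨ.continuous A))
  isLocal A σ τ h := by
    simp only [Pi.sub_apply]
    rw [hΦ.isLocal A σ τ h, hΨ.isLocal A σ τ h]
  shiftCov A i σ := by
    simp only [Pi.sub_apply]
    rw [hΦ.shiftCov, hΨ.shiftCov]

lemma termL_add (R : JumpRates d q) {Φ Ψ : Pot d q} (hΦ : IsPotential Φ)
    (hsΦ : PNormSummable Φ) (hΨ : IsPotential Ψ) (hsΨ : PNormSummable Ψ)
    (Δ : Finset (Zd d)) (η : Conf d q) :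
    termL R (Φ + Ψ) Δ η = termL R Φ Δ η + termL R Ψ Δ η := by
  unfold termL
  rw [← mul_add, ← Finset.sum_add_distrib]
  congr 1
  refine Finset.sum_congr rfl fun ζ _ => ?_
  rw [← mul_add]
  congr 1
  rw [← Summable.tsum_add (summable_diff hΦ hsΦ Δ ζ η) (summable_diff hΨ hsΨ Δ ζ η)]
  refine tsum_congr fun A => ?_
  simp only [Pi.add_apply]
  ring

lemma FL_add (R : JumpRates d q) {Φ Ψ : Pot d q} (hΦ : IsPotential Φ)
    (hsΦ : PNormSummable Φ) (hΨ : IsPotential Ψ) (hsΨ : PNormSummable Ψ) (η : Conf d q) :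
    FL R (Φ + Ψ) η = FL R Φ η + FL R Ψ η := by
  unfold FL
  rw [← Summable.tsum_add (summable_termL R hΦ hsΦ η) (summable_termL R hΨ hsΨ η)]
  exact tsum_congr fun Δ => termL_add R hΦ hsΦ hΨ hsΨ Δ.1 η

lemma FL_integrable (R : JumpRates d q) {Φ : Pot d q} (hΦ : IsPotential Φ)
    (hs : PNormSummable Φ) (μ : Measure (Conf d q)) [IsFiniteMeasure μ] :
    Integrable (FL R Φ) μ :=
  (BoundedContinuousFunction.ofNormedAddCommGroup (FL R Φ) (FL_continuous R hΦ hs)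
    (cbarSum R * (2 * pnorm Φ))
    (fun η => by rw [Real.norm_eq_abs]; exact FL_bound R hΦ hs η)).integrable μ

end Aux

/-- joint continuity of the pairing, from the proof of Theorem 2.4.
If `ν_n → ν` weakly and `‖Φ_n − Φ‖ → 0` with `‖Φ‖ < ∞`, then
`⟨ν_n, Φ_n⟩_L → ⟨ν, Φ⟩_L`. -/
theorem pairing_jointly_continuous (hd : 1 ≤ d) (hq : 2 ≤ q)
    (R : JumpRates d q)
    (νn : ℕ → ProbabilityMeasure (Conf d q)) (ν : ProbabilityMeasure (Conf d q))
    (hν : Tendsto νn atTop (𝓝 ν))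
    (Φn : ℕ → Pot d q) (Φ : Pot d q)
    (hΦn : ∀ n, IsPotential (Φn n)) (hΦ : IsPotential Φ)
    (hΦsum : PNormSummable Φ)
    (hdiffsum : ∀ n, PNormSummable (Φn n - Φ))
    (hconv : Tendsto (fun n => pnorm (Φn n - Φ)) atTop (𝓝 0)) :
    Tendsto (fun n => pairingL R (Φn n) (νn n : Measure (Conf d q))) atTop
      (𝓝 (pairingL R Φ (ν : Measure (Conf d q)))) := by
  have hΨpot : ∀ n, IsPotential (Φn n - Φ) := fun n => (hΦn n).sub hΦ
  -- the fixed bounded continuous function `F_{L,Φ}`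
  let fΦ : BoundedContinuousFunction (Conf d q) ℝ :=
    BoundedContinuousFunction.ofNormedAddCommGroup (FL R Φ) (FL_continuous R hΦ hΦsum)
      (cbarSum R * (2 * pnorm Φ))
      (fun η => by rw [Real.norm_eq_abs]; exact FL_bound R hΦ hΦsum η)
  -- weak convergence gives convergence of the `Φ`-part
  have hJ : Tendsto (fun n => ∫ η, FL R Φ η ∂(νn n : Measure (Conf d q))) atTop
      (𝓝 (∫ η, FL R Φ η ∂(ν : Measure (Conf d q)))) := by
    have h := (MeasureTheory.ProbabilityMeasure.tendsto_iff_forall_integral_tendsto).mp hν fΦ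
    exact h
  -- the `(Φ_n - Φ)`-part tends to `0`
  have hI : Tendsto (fun n => ∫ η, FL R (Φn n - Φ) η ∂(νn n : Measure (Conf d q))) atTop
      (𝓝 0) := by
    apply squeeze_zero_norm (a := fun n => cbarSum R * (2 * pnorm (Φn n - Φ)))
    · intro n
      have hb : ∀ᵐ η ∂(νn n : Measure (Conf d q)),
          ‖FL R (Φn n - Φ) η‖ ≤ cbarSum R * (2 * pnorm (Φn n - Φ)) :=
        Filter.Eventually.of_forall fun η => by
          rw [Real.norm_eq_abs]; exact FL_bound R (hΨpot n) (hdiffsum n) η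
      have h := norm_integral_le_of_norm_le_const hb
      simpa using h
    · have h : Tendsto (fun n => cbarSum R * (2 * pnorm (Φn n - Φ))) atTop
          (𝓝 (cbarSum R * (2 * 0))) := ((hconv.const_mul 2).const_mul (cbarSum R))
      simpa using h
  -- decomposition of the pairing
  have hdecomp : ∀ n, pairingL R (Φn n) (νn n : Measure (Conf d q)) =
      (∫ η, FL R (Φn n - Φ) η ∂(νn n : Measure (Conf d q)))
        + ∫ η, FL R Φ η ∂(νn n : Measure (Conf d q)) := by
    intro n
    have hfl : FL R (Φn n) = fun η => FL R (Φn n - Φ) η + FL R Φ η := funext fun η => by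
      conv_lhs => rw [show Φn n = (Φn n - Φ) + Φ by rw [sub_add_cancel]]
      exact FL_add R (hΨpot n) (hdiffsum n) hΦ hΦsum η
    show (∫ η, FL R (Φn n) η ∂(νn n : Measure (Conf d q))) = _
    rw [hfl]
    exact integral_add (FL_integrable R (hΨpot n) (hdiffsum n) _)
      (FL_integrable R hΦ hΦsum _)
  have hsum : Tendsto (fun n => (∫ η, FL R (Φn n - Φ) η ∂(νn n : Measure (Conf d q)))
        + ∫ η, FL R Φ η ∂(νn n : Measure (Conf d q))) atTop
      (𝓝 (0 + ∫ η, FL R Φ η ∂(ν : Measure (Conf d q)))) := hI.add hJ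
  rw [zero_add] at hsum
  have heq : (fun n => pairingL R (Φn n) (νn n : Measure (Conf d q)))
      = fun n => (∫ η, FL R (Φn n - Φ) η ∂(νn n : Measure (Conf d q)))
        + ∫ η, FL R Φ η ∂(νn n : Measure (Conf d q)) := funext hdecomp
  rw [heq]
  exact hsum
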